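/- Let P be a symmetric real n×n matrix, R a symmetric real m×m matrix, Q a real m×n matrix, and ε, p, r, s ∈ ℝ. Suppose: xᵀPx ≥ p‖x‖² for all x ∈ ℝⁿ, yᵀRy ≤ r‖y‖² for all y ∈ ℝᵐ, ‖Qx‖² ≤ s²‖x‖² for all x ∈ ℝⁿ, and that 0 < p − ε, 0 < ε − r, and s² < (p − ε)(ε − r). Then the block matrix 𝒮_ε = [[P − εIₙ, Qᵀ], [Q, εIₘ − R]] is positive definite. -/

import Mathlib

open Matrix

lemma quad_pos_aux (α β c X Y : ℝ) (hα : 0 < α) (hβ : 0 < β)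
    (hc : c ^ 2 < α * β * (X * Y) ∨ c = 0) (hX : 0 ≤ X) (hY : 0 ≤ Y)
    (hXY : 0 < X ∨ 0 < Y) : 0 < α * X + β * Y + 2 * c := by
  rcases hc with hc | hc
  · by_contra h
    push_neg at h
    have hT : 0 ≤ α * X + β * Y := add_nonneg (mul_nonneg hα.le hX) (mul_nonneg hβ.le hY)
    have h2 : (α * X + β * Y) * (α * X + β * Y) ≤ (-(2 * c)) * (-(2 * c)) :=
      mul_self_le_mul_self hT (by linarith)
    nlinarith [sq_nonneg (α * X - β * Y)]
  · rcases hXY with h | h <;> nlinarith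

/-- Sufficient spectral conditions for positive definiteness of the symmetrizer:
if `xᵀPx ≥ p‖x‖²`, `yᵀRy ≤ r‖y‖²`, `‖Qx‖² ≤ s²‖x‖²`, and `0 < p − ε`, `0 < ε − r`,
`s² < (p − ε)(ε − r)`, then `𝒮_ε = [[P − εI, Qᵀ], [Q, εI − R]]` is positive definite. -/
theorem stmt_16 (n m : ℕ) (P : Matrix (Fin n) (Fin n) ℝ) (R : Matrix (Fin m) (Fin m) ℝ)
    (Q : Matrix (Fin m) (Fin n) ℝ) (hP : Pᵀ = P) (hR : Rᵀ = R) (ε p r s : ℝ)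
    (hp : ∀ x : Fin n → ℝ, p * ∑ i, x i ^ 2 ≤ x ⬝ᵥ (P *ᵥ x))
    (hr : ∀ y : Fin m → ℝ, y ⬝ᵥ (R *ᵥ y) ≤ r * ∑ i, y i ^ 2)
    (hq : ∀ x : Fin n → ℝ, ∑ i, (Q *ᵥ x) i ^ 2 ≤ s ^ 2 * ∑ i, x i ^ 2)
    (hpe : 0 < p - ε) (her : 0 < ε - r) (hs : s ^ 2 < (p - ε) * (ε - r)) :
    (Matrix.fromBlocks (P - ε • 1) Qᵀ Q (ε • 1 - R)).PosDef := by
  rw [Matrix.posDef_iff_dotProduct_mulVec]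
  constructor
  · unfold Matrix.IsHermitian
    simp [conjTranspose_eq_transpose_of_trivial, fromBlocks_transpose, transpose_sub, hP, hR]
  · intro z hz
    set x : Fin n → ℝ := z ∘ Sum.inl with hx
    set y : Fin m → ℝ := z ∘ Sum.inr with hy
    have hzel : z = Sum.elim x y := by
      funext i; cases i <;> rfl
    have key : star z ⬝ᵥ ((Matrix.fromBlocks (P - ε • 1) Qᵀ Q (ε • 1 - R)) *ᵥ z)
        = (x ⬝ᵥ (P *ᵥ x) - ε * ∑ i, x i ^ 2) + 2 * ((Q *ᵥ x) ⬝ᵥ y)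
          + (ε * ∑ i, y i ^ 2 - y ⬝ᵥ (R *ᵥ y)) := by
      rw [show (star z) = z from rfl, hzel, fromBlocks_mulVec, sumElim_dotProduct_sumElim]
      simp only [Sum.elim_comp_inl, Sum.elim_comp_inr]
      rw [sub_mulVec, sub_mulVec]
      simp only [dotProduct_add, dotProduct_sub]
      have h1 : x ⬝ᵥ ((ε • (1 : Matrix (Fin n) (Fin n) ℝ)) *ᵥ x) = ε * ∑ i, x i ^ 2 := by
        rw [smul_mulVec, one_mulVec, dotProduct_smul]
        simp [dotProduct, sq, Finset.mul_sum]
      have h2 : y ⬝ᵥ ((ε • (1 : Matrix (Fin m) (Fin m) ℝ)) *ᵥ y) = ε * ∑ i, y i ^ 2 := by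
        rw [smul_mulVec, one_mulVec, dotProduct_smul]
        simp [dotProduct, sq, Finset.mul_sum]
      have h3 : x ⬝ᵥ (Qᵀ *ᵥ y) = (Q *ᵥ x) ⬝ᵥ y := by
        rw [dotProduct_mulVec, vecMul_transpose]
      have h4 : y ⬝ᵥ (Q *ᵥ x) = (Q *ᵥ x) ⬝ᵥ y := dotProduct_comm _ _
      rw [h1, h2, h3, h4]; ring
    rw [key]
    set X : ℝ := ∑ i, x i ^ 2 with hX
    set Y : ℝ := ∑ i, y i ^ 2 with hY
    have hXn : 0 ≤ X := Finset.sum_nonneg fun i _ => sq_nonneg _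
    have hYn : 0 ≤ Y := Finset.sum_nonneg fun i _ => sq_nonneg _
    have hXY : 0 < X ∨ 0 < Y := by
      by_contra h
      push_neg at h
      have hX0 : X = 0 := le_antisymm h.1 hXn
      have hY0 : Y = 0 := le_antisymm h.2 hYn
      apply hz
      funext i
      cases i with
      | inl i =>
        have := (Finset.sum_eq_zero_iff_of_nonneg (fun j _ => sq_nonneg (x j))).mp hX0 i
          (Finset.mem_univ i)
        exact pow_eq_zero_iff (n := 2) two_ne_zero |>.mp this
      | inr i =>
        have := (Finset.sum_eq_zero_iff_of_nonneg (fun j _ => sq_nonneg (y j))).mp hY0 i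
          (Finset.mem_univ i)
        exact pow_eq_zero_iff (n := 2) two_ne_zero |>.mp this
    set c : ℝ := (Q *ᵥ x) ⬝ᵥ y with hc
    have hcs : c ^ 2 ≤ s ^ 2 * X * Y := by
      have := Finset.sum_mul_sq_le_sq_mul_sq Finset.univ (fun i => (Q *ᵥ x) i) y
      calc c ^ 2 ≤ (∑ i, (Q *ᵥ x) i ^ 2) * ∑ i, y i ^ 2 := this
        _ ≤ (s ^ 2 * X) * Y := by
            apply mul_le_mul_of_nonneg_right (hq x) hYn
    have hmain : 0 < (p - ε) * X + (ε - r) * Y + 2 * c := by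
      apply quad_pos_aux _ _ _ _ _ hpe her _ hXn hYn hXY
      rcases eq_or_lt_of_le (mul_nonneg hXn hYn) with hXY0 | hXY0
      · right
        have : c ^ 2 ≤ 0 := by
          calc c ^ 2 ≤ s ^ 2 * X * Y := hcs
            _ = s ^ 2 * (X * Y) := by ring
            _ = 0 := by rw [← hXY0]; ring
        exact pow_eq_zero_iff (n := 2) two_ne_zero |>.mp (le_antisymm this (sq_nonneg _))
      · left
        calc c ^ 2 ≤ s ^ 2 * (X * Y) := by linarith [hcs, le_of_eq (mul_assoc (s^2) X Y)]
          _ < (p - ε) * (ε - r) * (X * Y) := by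
              exact mul_lt_mul_of_pos_right hs hXY0
    have h1 := hp x
    have h2 := hr y
    nlinarith [hmain, h1, h2]
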